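/- For every nonnegative allowable d×d matrix g and x, y ∈ S⁺: if d(x,y) ≤ 1/2 then |σ(g,x) − σ(g,y)| ≤ 4 d(x,y), and in general |σ(g,x) − σ(g,y)| ≤ 2(2 + log L(g)) d(x,y). -/

import Mathlib

/-- ℓ¹ norm on `ℝ^d`. -/
def l1 {d : ℕ} (x : Fin d → ℝ) : ℝ := ∑ i, |x i|

/-- The set of nonnegative vectors of ℓ¹-norm one. -/
def Splus (d : ℕ) : Set (Fin d → ℝ) := {x | (∀ i, 0 ≤ x i) ∧ ∑ i, x i = 1}

/-- ℓ¹ operator norm `‖g‖ = sup_{‖x‖₁ = 1} ‖gx‖₁`. -/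
noncomputable def opN {d : ℕ} (g : Matrix (Fin d) (Fin d) ℝ) : ℝ :=
  sSup {c : ℝ | ∃ x : Fin d → ℝ, l1 x = 1 ∧ c = l1 (g.mulVec x)}

/-- `v(g) = inf_{x ∈ S⁺} ‖gx‖₁`. -/
noncomputable def vN {d : ℕ} (g : Matrix (Fin d) (Fin d) ℝ) : ℝ :=
  sInf {c : ℝ | ∃ x ∈ Splus d, c = l1 (g.mulVec x)}

/-- A nonnegative matrix is allowable if every row and column has a positive entry. -/
def Allowable {d : ℕ} (g : Matrix (Fin d) (Fin d) ℝ) : Prop :=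
  (∀ i j, 0 ≤ g i j) ∧ (∀ i, ∃ j, 0 < g i j) ∧ (∀ j, ∃ i, 0 < g i j)

noncomputable def mfun {d : ℕ} (u v : Fin d → ℝ) : ℝ :=
  sInf {c : ℝ | ∃ i : Fin d, 0 < v i ∧ c = u i / v i}

/-- The projective distance `d(x,y) = φ(m(x,y)m(y,x))` with `φ(s) = (1-s)/(1+s)`. -/
noncomputable def dmet {d : ℕ} (x y : Fin d → ℝ) : ℝ :=
  (1 - mfun x y * mfun y x) / (1 + mfun x y * mfun y x)

section aux
variable {d : ℕ}

lemma l1_mulVec_eq (g : Matrix (Fin d) (Fin d) ℝ) (hg0 : ∀ i j, 0 ≤ g i j)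
    {x : Fin d → ℝ} (hx : ∀ i, 0 ≤ x i) :
    l1 (g.mulVec x) = ∑ j, (∑ i, g i j) * x j := by
  unfold l1
  have h1 : ∀ i, |g.mulVec x i| = ∑ j, g i j * x j := by
    intro i
    have : g.mulVec x i = ∑ j, g i j * x j := by
      simp [Matrix.mulVec, dotProduct]
    rw [this, abs_of_nonneg]
    exact Finset.sum_nonneg fun j _ => mul_nonneg (hg0 i j) (hx j)
  simp_rw [h1, Finset.sum_mul]
  exact Finset.sum_comm

lemma exists_pos_of_splus {y : Fin d → ℝ} (hy : y ∈ Splus d) : ∃ i, 0 < y i := by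
  by_contra h
  push_neg at h
  have hz : ∀ i, y i = 0 := fun i => le_antisymm (h i) (hy.1 i)
  have : (1 : ℝ) = 0 := by rw [← hy.2]; exact Finset.sum_eq_zero fun i _ => hz i
  norm_num at this

lemma mfun_set_nonempty {x y : Fin d → ℝ} (hy : y ∈ Splus d) :
    {c : ℝ | ∃ i : Fin d, 0 < y i ∧ c = x i / y i}.Nonempty := by
  obtain ⟨i, hi⟩ := exists_pos_of_splus hy
  exact ⟨x i / y i, i, hi, rfl⟩

lemma mfun_set_bdd {x y : Fin d → ℝ} (hx : x ∈ Splus d) :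
    BddBelow {c : ℝ | ∃ i : Fin d, 0 < y i ∧ c = x i / y i} := by
  refine ⟨0, fun c hc => ?_⟩
  obtain ⟨i, hi, rfl⟩ := hc
  exact div_nonneg (hx.1 i) hi.le

lemma mfun_nonneg {x y : Fin d → ℝ} (hx : x ∈ Splus d) (hy : y ∈ Splus d) :
    0 ≤ mfun x y :=
  le_csInf (mfun_set_nonempty hy) (fun c hc => by
    obtain ⟨i, hi, rfl⟩ := hc; exact div_nonneg (hx.1 i) hi.le)

lemma mfun_le {x y : Fin d → ℝ} (hx : x ∈ Splus d) {i : Fin d} (hi : 0 < y i) :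
    mfun x y ≤ x i / y i :=
  csInf_le (mfun_set_bdd hx) ⟨i, hi, rfl⟩

lemma mfun_le_one {x y : Fin d → ℝ} (hx : x ∈ Splus d) (hy : y ∈ Splus d) :
    mfun x y ≤ 1 := by
  obtain ⟨i, hyi, hxi⟩ : ∃ i, 0 < y i ∧ x i ≤ y i := by
    by_contra h
    push_neg at h
    obtain ⟨i0, hi0⟩ := exists_pos_of_splus hy
    have hlt : ∑ i, y i < ∑ i, x i := by
      refine Finset.sum_lt_sum (fun i _ => ?_) ⟨i0, Finset.mem_univ i0, h i0 hi0⟩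
      rcases (hy.1 i).lt_or_eq with hp | hp
      · exact (h i hp).le
      · rw [← hp]; exact hx.1 i
    rw [hx.2, hy.2] at hlt
    exact lt_irrefl _ hlt
  calc mfun x y ≤ x i / y i := mfun_le hx hyi
    _ ≤ 1 := (div_le_one hyi).mpr hxi

lemma mfun_pointwise {x y : Fin d → ℝ} (hx : x ∈ Splus d) (hy : y ∈ Splus d)
    (i : Fin d) : mfun x y * y i ≤ x i := by
  rcases (hy.1 i).lt_or_eq with hp | hp
  · have := mfun_le hx (y := y) hp
    calc mfun x y * y i ≤ (x i / y i) * y i :=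
          mul_le_mul_of_nonneg_right this hp.le
      _ = x i := div_mul_cancel₀ _ hp.ne'
  · rw [← hp, mul_zero]; exact hx.1 i

lemma splus_l1 {x : Fin d → ℝ} (hx : x ∈ Splus d) : l1 x = 1 := by
  unfold l1
  rw [← hx.2]
  exact Finset.sum_congr rfl fun i _ => abs_of_nonneg (hx.1 i)

lemma colsum_pos (g : Matrix (Fin d) (Fin d) ℝ) (hg : Allowable g) (j : Fin d) :
    0 < ∑ i, g i j := by
  obtain ⟨i, hi⟩ := hg.2.2 j
  exact Finset.sum_pos' (fun i _ => hg.1 i j) ⟨i, Finset.mem_univ i, hi⟩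

lemma l1_mulVec_lb (hd : 2 ≤ d) (g : Matrix (Fin d) (Fin d) ℝ) (hg : Allowable g)
    {x : Fin d → ℝ} (hx : x ∈ Splus d) :
    haveI : Nonempty (Fin d) := ⟨⟨0, by omega⟩⟩
    Finset.univ.inf' Finset.univ_nonempty (fun j => ∑ i, g i j) ≤ l1 (g.mulVec x) := by
  haveI : Nonempty (Fin d) := ⟨⟨0, by omega⟩⟩
  set ε := Finset.univ.inf' Finset.univ_nonempty (fun j => ∑ i, g i j) with hε
  rw [l1_mulVec_eq g hg.1 hx.1]
  calc ε = ε * ∑ j, x j := by rw [hx.2, mul_one]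
    _ = ∑ j, ε * x j := Finset.mul_sum _ _ _
    _ ≤ ∑ j, (∑ i, g i j) * x j := by
        refine Finset.sum_le_sum fun j _ => ?_
        exact mul_le_mul_of_nonneg_right (Finset.inf'_le _ (Finset.mem_univ j)) (hx.1 j)

lemma l1_mulVec_pos (hd : 2 ≤ d) (g : Matrix (Fin d) (Fin d) ℝ) (hg : Allowable g)
    {x : Fin d → ℝ} (hx : x ∈ Splus d) : 0 < l1 (g.mulVec x) := by
  haveI : Nonempty (Fin d) := ⟨⟨0, by omega⟩⟩
  refine lt_of_lt_of_le ?_ (l1_mulVec_lb hd g hg hx)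
  rw [Finset.lt_inf'_iff]
  exact fun j _ => colsum_pos g hg j

lemma vN_pos (hd : 2 ≤ d) (g : Matrix (Fin d) (Fin d) ℝ) (hg : Allowable g) :
    0 < vN g := by
  haveI : Nonempty (Fin d) := ⟨⟨0, by omega⟩⟩
  have hne : {c : ℝ | ∃ x ∈ Splus d, c = l1 (g.mulVec x)}.Nonempty := by
    refine ⟨l1 (g.mulVec (fun _ => 1/d)), ⟨fun _ => 1/d, ⟨fun i => by positivity, ?_⟩, rfl⟩⟩
    rw [Finset.sum_const, Finset.card_univ, Fintype.card_fin]
    rw [nsmul_eq_mul]; field_simp [show (d:ℝ) ≠ 0 by exact_mod_cast (by omega : d ≠ 0)]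
  have h2 := le_csInf hne (fun c hc => by
    obtain ⟨z, hz, rfl⟩ := hc
    exact l1_mulVec_lb hd g hg hz)
  have h1 : (0:ℝ) < Finset.univ.inf' Finset.univ_nonempty (fun j => ∑ i, g i j) := by
    rw [Finset.lt_inf'_iff]
    exact fun j _ => colsum_pos g hg j
  exact lt_of_lt_of_le h1 h2

lemma vN_le (g : Matrix (Fin d) (Fin d) ℝ) {x : Fin d → ℝ} (hx : x ∈ Splus d) :
    vN g ≤ l1 (g.mulVec x) := by
  refine csInf_le ⟨0, fun c hc => ?_⟩ ⟨x, hx, rfl⟩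
  obtain ⟨z, hz, rfl⟩ := hc
  exact Finset.sum_nonneg fun i _ => abs_nonneg _

lemma opN_ge (g : Matrix (Fin d) (Fin d) ℝ) (hg : Allowable g)
    {x : Fin d → ℝ} (hx : x ∈ Splus d) : l1 (g.mulVec x) ≤ opN g := by
  refine le_csSup ⟨∑ j, ∑ i, g i j, fun c hc => ?_⟩ ⟨x, splus_l1 hx, rfl⟩
  obtain ⟨z, hz, rfl⟩ := hc
  have key : ∀ i, |g.mulVec z i| ≤ ∑ j, g i j * |z j| := by
    intro i
    have : g.mulVec z i = ∑ j, g i j * z j := by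
      simp [Matrix.mulVec, dotProduct]
    rw [this]
    calc |∑ j, g i j * z j| ≤ ∑ j, |g i j * z j| := Finset.abs_sum_le_sum_abs _ _
      _ = ∑ j, g i j * |z j| := Finset.sum_congr rfl fun j _ => by
          rw [abs_mul, abs_of_nonneg (hg.1 i j)]
  calc l1 (g.mulVec z) ≤ ∑ i, ∑ j, g i j * |z j| := Finset.sum_le_sum fun i _ => key i
    _ = ∑ j, (∑ i, g i j) * |z j| := by rw [Finset.sum_comm]; simp [Finset.sum_mul]
    _ ≤ ∑ j, (∑ j', ∑ i, g i j') * |z j| := by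
        refine Finset.sum_le_sum fun j _ => ?_
        refine mul_le_mul_of_nonneg_right ?_ (abs_nonneg _)
        exact Finset.single_le_sum (f := fun j' => ∑ i, g i j')
          (fun j' _ => Finset.sum_nonneg fun i _ => hg.1 i j') (Finset.mem_univ j)
    _ = (∑ j', ∑ i, g i j') * l1 z := by rw [← Finset.mul_sum]; rfl
    _ = ∑ j', ∑ i, g i j' := by rw [hz, mul_one]
    _ = ∑ j, ∑ i, g i j := rfl

lemma l1_mulVec_mono (g : Matrix (Fin d) (Fin d) ℝ) (hg0 : ∀ i j, 0 ≤ g i j)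
    {x y : Fin d → ℝ} (hx : x ∈ Splus d) (hy : y ∈ Splus d) :
    mfun x y * l1 (g.mulVec y) ≤ l1 (g.mulVec x) := by
  rw [l1_mulVec_eq g hg0 hx.1, l1_mulVec_eq g hg0 hy.1, Finset.mul_sum]
  refine Finset.sum_le_sum fun j _ => ?_
  have h1 : (∑ i, g i j) * (mfun x y * y j) ≤ (∑ i, g i j) * x j :=
    mul_le_mul_of_nonneg_left (mfun_pointwise hx hy j)
      (Finset.sum_nonneg fun i _ => hg0 i j)
  calc mfun x y * ((∑ i, g i j) * y j) = (∑ i, g i j) * (mfun x y * y j) := by ring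
    _ ≤ (∑ i, g i j) * x j := h1

end aux

/-- If `d(x,y) ≤ 1/2` then `|σ(g,x) − σ(g,y)| ≤ 4 d(x,y)`; in general
`|σ(g,x) − σ(g,y)| ≤ 2(2 + log L(g)) d(x,y)`. -/
theorem stmt8 {d : ℕ} (hd : 2 ≤ d) (g : Matrix (Fin d) (Fin d) ℝ)
    (hg : Allowable g) (x y : Fin d → ℝ) (hx : x ∈ Splus d) (hy : y ∈ Splus d) :
    (dmet x y ≤ 1 / 2 →
      |Real.log (l1 (g.mulVec x)) - Real.log (l1 (g.mulVec y))| ≤ 4 * dmet x y) ∧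
    |Real.log (l1 (g.mulVec x)) - Real.log (l1 (g.mulVec y))| ≤
      2 * (2 + Real.log (opN g / vN g)) * dmet x y := by
  set m1 := mfun x y with hm1def
  set m2 := mfun y x with hm2def
  set s := m1 * m2 with hsdef
  set A := l1 (g.mulVec x) with hAdef
  set B := l1 (g.mulVec y) with hBdef
  have hA : 0 < A := l1_mulVec_pos hd g hg hx
  have hB : 0 < B := l1_mulVec_pos hd g hg hy
  have hAB : m1 * B ≤ A := l1_mulVec_mono g hg.1 hx hy
  have hBA : m2 * A ≤ B := l1_mulVec_mono g hg.1 hy hx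
  have hm1n : 0 ≤ m1 := mfun_nonneg hx hy
  have hm2n : 0 ≤ m2 := mfun_nonneg hy hx
  have hm11 : m1 ≤ 1 := mfun_le_one hx hy
  have hm21 : m2 ≤ 1 := mfun_le_one hy hx
  have hs0 : 0 ≤ s := mul_nonneg hm1n hm2n
  have hs1 : s ≤ 1 := by nlinarith
  have h1s : 0 < 1 + s := by linarith
  have hDdef : dmet x y = (1 - s) / (1 + s) := rfl
  have hD0 : 0 ≤ dmet x y := by
    rw [hDdef]; exact div_nonneg (by linarith) h1s.le
  -- key contraction estimate when s ≥ 1/3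
  have key1 : 1/3 ≤ s → |Real.log A - Real.log B| ≤ 4 * dmet x y := by
    intro hs3
    have hsp : 0 < s := by linarith
    have hlog : |Real.log A - Real.log B| ≤ -Real.log s := by
      rw [abs_sub_le_iff]
      constructor
      · have h1 : s * A ≤ B := by nlinarith
        have := Real.log_le_log (by positivity) h1
        rw [Real.log_mul hsp.ne' hA.ne'] at this
        linarith
      · have h1 : s * B ≤ A := by nlinarith
        have := Real.log_le_log (by positivity) h1
        rw [Real.log_mul hsp.ne' hB.ne'] at this
        linarith
    have hstep : -Real.log s ≤ (1 - s) / s := by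
      have h := Real.log_le_sub_one_of_pos (show (0:ℝ) < s⁻¹ by positivity)
      rw [Real.log_inv] at h
      have : s⁻¹ - 1 = (1 - s) / s := by field_simp
      linarith [this ▸ h]
    have hstep2 : (1 - s) / s ≤ 4 * ((1 - s) / (1 + s)) := by
      have hre : 4 * ((1 - s) / (1 + s)) = (4 * (1 - s)) / (1 + s) := by ring
      rw [hre, div_le_div_iff₀ hsp h1s]
      nlinarith [mul_nonneg (show (0:ℝ) ≤ 1 - s by linarith) (show (0:ℝ) ≤ 3*s - 1 by linarith)]
    rw [hDdef]
    linarith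
  -- general bound via log L
  have hvN : 0 < vN g := vN_pos hd g hg
  have hopA : A ≤ opN g := opN_ge g hg hx
  have hopB : B ≤ opN g := opN_ge g hg hy
  have hvA : vN g ≤ A := vN_le g hx
  have hvB : vN g ≤ B := vN_le g hy
  have hop : 0 < opN g := lt_of_lt_of_le hvN (le_trans hvA hopA)
  set L := Real.log (opN g / vN g) with hLdef
  have hL0 : 0 ≤ L := Real.log_nonneg ((one_le_div hvN).mpr (le_trans hvA hopA))
  have key2 : |Real.log A - Real.log B| ≤ L := by
    rw [hLdef, Real.log_div hop.ne' hvN.ne', abs_sub_le_iff]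
    constructor
    · linarith [Real.log_le_log hA hopA, Real.log_le_log hvN hvB]
    · linarith [Real.log_le_log hB hopB, Real.log_le_log hvN hvA]
  constructor
  · intro hDle
    refine key1 ?_
    rw [hDdef, div_le_iff₀ h1s] at hDle
    linarith
  · by_cases hs3 : 1/3 ≤ s
    · have h4 := key1 hs3
      nlinarith
    · push_neg at hs3
      have hDhalf : 1/2 < dmet x y := by
        rw [hDdef, lt_div_iff₀ h1s]
        linarith
      nlinarith [key2, hL0, mul_nonneg (show (0:ℝ) ≤ 2 + L by linarith)
        (show (0:ℝ) ≤ dmet x y - 1/2 by linarith)]
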